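/- Let G be a well-separated graph on n vertices (for a fixed positive integer s with ln ln n ≥ s), and let T be the union of all minimal non-expanding vertex subsets of G of size at most s−1. Then there exists a subset T₁ ⊆ T with |T₁| = |N(T)| such that G contains exactly one perfect matching between T₁ and N(T). -/

import Mathlib

open MeasureTheory Finset

attribute [local instance] Classical.propDecidable

set_option maxHeartbeats 800000

noncomputable section RankSparse

/-- Bernoulli measure on `Bool` with success probability `p`. -/
def bern (p : ℝ) : Measure Bool :=
  (Real.toNNReal p) • Measure.dirac true + (Real.toNNReal (1 - p)) • Measure.dirac false

instance (p : ℝ) : IsFiniteMeasure (bern p) := by unfold bern; infer_instance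

/-- Product measure: i.i.d. Bernoulli(p) entries indexed by pairs `(i,j)`. -/
def entriesMeasure (n : ℕ) (p : ℝ) : Measure (Fin n → Fin n → Bool) :=
  Measure.pi fun _ => Measure.pi fun _ => bern p

/-- The random sparsified symmetric matrix `Q(W,p)`: for `i ≤ j`,
`q_{ij} = w_{ij} ξ_{ij}` with `ξ_{ij}` Bernoulli, and `q_{ji} = q_{ij}`. -/
def QW {n : ℕ} (W : Matrix (Fin n) (Fin n) ℂ) (ω : Fin n → Fin n → Bool) :
    Matrix (Fin n) (Fin n) ℂ :=
  Matrix.of fun i j =>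
    if i ≤ j then (if ω i j then W i j else 0) else (if ω j i then W j i else 0)

/-- The adjacency relation of the graph `G(Q)` of a symmetric matrix:
`i` adjacent to `j` iff `q_{ij} ≠ 0` (self-loops allowed). -/
def adjOf {n : ℕ} (Q : Matrix (Fin n) (Fin n) ℂ) : Fin n → Fin n → Prop :=
  fun i j => Q i j ≠ 0

/-- The neighborhood `N(S)` of a vertex set: all vertices adjacent to at
least one vertex of `S` (may intersect `S`). -/
def nbr {n : ℕ} (A : Fin n → Fin n → Prop) (S : Finset (Fin n)) : Finset (Fin n) :=
  univ.filter fun v => ∃ u ∈ S, A u v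

/-- `S` is non-expanding if `|N(S)| < |S|`. -/
def nonExpanding {n : ℕ} (A : Fin n → Fin n → Prop) (S : Finset (Fin n)) : Prop :=
  (nbr A S).card < S.card

/-- Minimally non-expanding: non-expanding with no proper non-expanding subset. -/
def minNonExpanding {n : ℕ} (A : Fin n → Fin n → Prop) (S : Finset (Fin n)) : Prop :=
  nonExpanding A S ∧ ∀ T ⊂ S, ¬ nonExpanding A T

/-- Degree of a vertex: number of its neighbors (a loop makes `v` its own neighbor). -/
def deg {n : ℕ} (A : Fin n → Fin n → Prop) (v : Fin n) : ℕ :=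
  (univ.filter fun u => A v u).card

/-- A set is unobstructed if it contains no non-expanding subset. -/
def unobstructed {n : ℕ} (A : Fin n → Fin n → Prop) (S : Finset (Fin n)) : Prop :=
  ∀ T ⊆ S, ¬ nonExpanding A T

/-- A set is `t`-unobstructed if it contains no non-expanding subset of size at most `t`. -/
def tUnobstructed {n : ℕ} (t : ℕ) (A : Fin n → Fin n → Prop) (S : Finset (Fin n)) : Prop :=
  ∀ T ⊆ S, T.card ≤ t → ¬ nonExpanding A T

/-- Maximum size of an unobstructed vertex set. -/
def maxUnobstructed {n : ℕ} (A : Fin n → Fin n → Prop) : ℕ :=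
  ((univ : Finset (Finset (Fin n))).filter fun S => unobstructed A S).sup Finset.card

/-- Maximum size of a `t`-unobstructed vertex set. -/
def maxTUnobstructed {n : ℕ} (t : ℕ) (A : Fin n → Fin n → Prop) : ℕ :=
  ((univ : Finset (Finset (Fin n))).filter fun S => tUnobstructed t A S).sup Finset.card

/-- A symmetric matrix is `t`-saturated if its rank equals the maximum size of a
`t`-unobstructed set of vertices of its graph. -/
def saturated (t : ℕ) {n : ℕ} (Q : Matrix (Fin n) (Fin n) ℂ) : Prop :=
  Q.rank = maxTUnobstructed t (adjOf Q)

/-- `min_{S} (n - |S| + |N(S)|)` over all vertex subsets of `G(Q)`. -/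
def rankFormula {n : ℕ} (Q : Matrix (Fin n) (Fin n) ℂ) : ℕ :=
  (univ : Finset (Finset (Fin n))).inf' univ_nonempty
    fun S => n - S.card + (nbr (adjOf Q) S).card

/-- The induced graph on the vertex set `S` is connected. -/
def connOn {n : ℕ} (A : Fin n → Fin n → Prop) (S : Finset (Fin n)) : Prop :=
  ∀ u ∈ S, ∀ v ∈ S, Relation.ReflTransGen (fun a b => a ∈ S ∧ b ∈ S ∧ A a b) u v

/-- There is a cycle of length `ℓ` through `v` (a cycle of length 1 is a self-loop). -/
def cycleThrough {n : ℕ} (A : Fin n → Fin n → Prop) (ℓ : ℕ) (v : Fin n) : Prop :=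
  ∃ f : ZMod ℓ → Fin n, Function.Injective f ∧ (∀ i, A (f i) (f (i + 1))) ∧ ∃ i, f i = v

/-- Well-separated graph (for parameters `N`, the ambient size, and `s`):
(W1) every connected subgraph on at most `5s` vertices has at most `s-1` vertices of
degree at most `ln ln N`; (W2) no cycle of length 1 or of length between 3 and `12 s`
contains a vertex of degree at most `ln ln N`. -/
def wellSeparated (N s : ℕ) {n : ℕ} (A : Fin n → Fin n → Prop) : Prop :=
  (∀ S : Finset (Fin n), S.card ≤ 5 * s → connOn A S →
      (S.filter fun v => (deg A v : ℝ) ≤ Real.log (Real.log N)).card ≤ s - 1) ∧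
  (∀ v : Fin n, (deg A v : ℝ) ≤ Real.log (Real.log N) →
      ∀ ℓ : ℕ, (ℓ = 1 ∨ (3 ≤ ℓ ∧ ℓ ≤ 12 * s)) → ¬ cycleThrough A ℓ v)

/-- Number of edges joining `S` to its complement. -/
def crossEdges {n : ℕ} (A : Fin n → Fin n → Prop) (S : Finset (Fin n)) : ℕ :=
  (univ.filter fun e : Fin n × Fin n => e.1 ∈ S ∧ e.2 ∉ S ∧ A e.1 e.2).card

/-- Small set expander (for ambient size `N` and parameter `s`). -/
def smallSetExpander (N s : ℕ) {n : ℕ} (A : Fin n → Fin n → Prop) : Prop :=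
  ∀ S : Finset (Fin n), (S.card : ℝ) ≤ (N : ℝ) / (Real.log N) ^ ((3:ℝ)/2) →
    (S.card ≤ crossEdges A S ∨
      ∃ S' ⊆ S, S'.card ≤ s - 1 ∧ crossEdges A S' < S'.card)

/-- Number of edges induced on `S` (counting loops once). -/
def inducedEdges {n : ℕ} (A : Fin n → Fin n → Prop) (S : Finset (Fin n)) : ℕ :=
  (univ.filter fun e : Fin n × Fin n => e.1 ∈ S ∧ e.2 ∈ S ∧ e.1 ≤ e.2 ∧ A e.1 e.2).card

/-- Locally sparse: every nonempty set of at most `N/(ln N)^{3/2}` vertices induces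
fewer than `4|S|` edges (i.e. has average degree less than 8). -/
def locallySparse (N : ℕ) {n : ℕ} (A : Fin n → Fin n → Prop) : Prop :=
  ∀ S : Finset (Fin n), S.Nonempty → (S.card : ℝ) ≤ (N : ℝ) / (Real.log N) ^ ((3:ℝ)/2) →
    inducedEdges A S < 4 * S.card

/-- `S` is nice: at least two vertices are each adjacent to exactly one vertex of `S`. -/
def nice {n : ℕ} (A : Fin n → Fin n → Prop) (S : Finset (Fin n)) : Prop :=
  2 ≤ (univ.filter fun v => (S.filter fun u => A v u).card = 1).card

/-- `S` is nearly nice: at least one vertex is adjacent to exactly one vertex of `S`. -/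
def nearlyNice {n : ℕ} (A : Fin n → Fin n → Prop) (S : Finset (Fin n)) : Prop :=
  1 ≤ (univ.filter fun v => (S.filter fun u => A v u).card = 1).card

/-- A good graph (for ambient size `N`, parameter `s` and probability `p`; here
`k = ln ln N / (2p)`). -/
def goodGraph (N s : ℕ) (p : ℝ) {n : ℕ} (A : Fin n → Fin n → Prop) : Prop :=
  (∀ S : Finset (Fin n), S.Nonempty → ¬ nice A S → (∀ T ⊂ S, T.Nonempty → nice A T) →
      (Real.log (Real.log N) / (2 * p) + 1 ≤ (S.card : ℝ) ∨
        ∃ T ⊆ S, T.card ≤ s - 1 ∧ nonExpanding A T)) ∧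
  (∀ S : Finset (Fin n), S.Nonempty → ¬ nearlyNice A S →
      (∀ T ⊂ S, T.Nonempty → nearlyNice A T) →
      (Real.log (Real.log N) / (2 * p) + 1 ≤ (S.card : ℝ) ∨
        (S.card ≤ s - 1 ∧ nonExpanding A S))) ∧
  (((univ.filter fun v : Fin n => deg A v < s).card : ℝ) ≤ 1 / (p * Real.log N)) ∧
  wellSeparated N s A

/-- A symmetric matrix is good if its graph is good. -/
def goodMatrix (N s : ℕ) (p : ℝ) {n : ℕ} (Q : Matrix (Fin n) (Fin n) ℂ) : Prop :=
  goodGraph N s p (adjOf Q)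

/-- The upper-left `min m n × min m n` minor of a matrix. -/
def minor {n : ℕ} (Q : Matrix (Fin n) (Fin n) ℂ) (m : ℕ) :
    Matrix (Fin (min m n)) (Fin (min m n)) ℂ :=
  Q.submatrix (Fin.castLE (min_le_right m n)) (Fin.castLE (min_le_right m n))

end RankSparse

/-- `T`: the union of all minimal non-expanding vertex subsets of size at most
`s - 1`. -/
noncomputable def Tset {n : ℕ} (s : ℕ) (A : Fin n → Fin n → Prop) : Finset (Fin n) :=
  univ.filter fun v => ∃ S : Finset (Fin n),
    v ∈ S ∧ S.card ≤ s - 1 ∧ minNonExpanding A S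

/-- `M` is a perfect matching between `T₁` and `B`: a set of vertex-disjoint
edges of the graph, each with first endpoint in `T₁` and second endpoint in `B`,
covering each vertex of `T₁` exactly once and each vertex of `B` exactly once. -/
def isMatching {n : ℕ} (A : Fin n → Fin n → Prop) (T₁ B : Finset (Fin n))
    (M : Finset (Fin n × Fin n)) : Prop :=
  (∀ e ∈ M, e.1 ∈ T₁ ∧ e.2 ∈ B ∧ A e.1 e.2) ∧
  (∀ e ∈ M, ∀ f ∈ M, e ≠ f →
    e.1 ≠ f.1 ∧ e.1 ≠ f.2 ∧ e.2 ≠ f.1 ∧ e.2 ≠ f.2) ∧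
  (∀ v ∈ T₁, ∃! e, e ∈ M ∧ e.1 = v) ∧
  (∀ v ∈ B, ∃! e, e ∈ M ∧ e.2 = v)

/-! ### Auxiliary machinery for the matching lemma -/

section MatchingAux

variable {n : ℕ} {A : Fin n → Fin n → Prop}

/-- Every neighbour of a minimal non-expanding set has at least two neighbours inside it. -/
lemma two_nbrs_of_minNonExpanding {S : Finset (Fin n)} (hmin : minNonExpanding A S)
    {w : Fin n} (hw : w ∈ nbr A S) :
    ∃ y ∈ S, ∃ z ∈ S, y ≠ z ∧ A y w ∧ A z w := by
  obtain ⟨hne, hminimal⟩ := hmin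
  have hw' := hw
  simp only [nbr, Finset.mem_filter, Finset.mem_univ, true_and] at hw'
  obtain ⟨u, hu, hAu⟩ := hw'
  have hsub : S.erase u ⊂ S := Finset.erase_ssubset hu
  have h2 := hminimal _ hsub
  unfold nonExpanding at h2 hne
  push_neg at h2
  have hcard : (S.erase u).card = S.card - 1 := Finset.card_erase_of_mem hu
  have hmono : nbr A (S.erase u) ⊆ nbr A S := by
    intro v hv
    simp only [nbr, Finset.mem_filter, Finset.mem_univ, true_and] at hv ⊢
    obtain ⟨x, hx, h⟩ := hv
    exact ⟨x, S.erase_subset u hx, h⟩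
  have hScard : 1 ≤ S.card := Finset.card_pos.2 ⟨u, hu⟩
  have hle := Finset.card_le_card hmono
  have heq : nbr A (S.erase u) = nbr A S :=
    Finset.eq_of_subset_of_card_le hmono (by omega)
  have hw2 : w ∈ nbr A (S.erase u) := heq ▸ hw
  simp only [nbr, Finset.mem_filter, Finset.mem_univ, true_and] at hw2
  obtain ⟨x, hx, hAx⟩ := hw2
  refine ⟨u, hu, x, S.erase_subset u hx, ?_, hAu, hAx⟩
  exact fun h => (Finset.mem_erase.1 hx).1 h.symm

/-- From a closed nodup chain (a combinatorial cycle, as a list) we obtain `cycleThrough`. -/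
lemma cycleThrough_of_list (l : List (Fin n)) (h2 : 2 ≤ l.length) (hnd : l.Nodup)
    (hch : l.Chain' A) (hne : l ≠ [])
    (hwrap : A (l.getLast hne) (l.head hne)) :
    ∀ v ∈ l, cycleThrough A l.length v := by
  intro v hv
  have hpos : 0 < l.length := by omega
  haveI : NeZero l.length := ⟨by omega⟩
  have hgetinj : ∀ (i j : ℕ) (hi : i < l.length) (hj : j < l.length),
      l[i] = l[j] → i = j := by
    intro i j hi hj h
    have := List.nodup_iff_injective_get.1 hnd (a₁ := ⟨i, hi⟩) (a₂ := ⟨j, hj⟩) (by simpa using h)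
    simpa using congrArg Fin.val this
  refine ⟨fun i => l[(i : ZMod l.length).val]'(ZMod.val_lt i), ?_, ?_, ?_⟩
  · intro i j hij
    apply ZMod.val_injective
    exact hgetinj _ _ (ZMod.val_lt i) (ZMod.val_lt j) hij
  · intro i
    have hval : (i + 1 : ZMod l.length).val = (i.val + 1) % l.length := by
      have h1 : (ZMod.val i + 1) % l.length
          = (ZMod.val i % l.length + 1 % l.length) % l.length := Nat.add_mod _ _ _
      rw [ZMod.val_add, ZMod.val_one_eq_one_mod, h1, Nat.mod_eq_of_lt (ZMod.val_lt i)]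
    by_cases hcase : i.val + 1 < l.length
    · have hval' : (i + 1 : ZMod l.length).val = i.val + 1 := by
        rw [hval, Nat.mod_eq_of_lt hcase]
      have hchain := List.isChain_iff_getElem.1 hch i.val (by omega)
      convert hchain using 2
    · have hlast : i.val = l.length - 1 := by have := ZMod.val_lt i; omega
      have hval' : (i + 1 : ZMod l.length).val = 0 := by
        rw [hval]; have : i.val + 1 = l.length := by omega
        rw [this, Nat.mod_self]
      have hL : l[(i : ZMod l.length).val]'(ZMod.val_lt i) = l.getLast hne := by
        rw [List.getLast_eq_getElem hne]
        congr 1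
      have hH : l[(i+1 : ZMod l.length).val]'(ZMod.val_lt _) = l.head hne := by
        rw [List.head_eq_getElem_zero hne]
        congr 1
      show A (l[(i : ZMod l.length).val]'(ZMod.val_lt i))
        (l[(i+1 : ZMod l.length).val]'(ZMod.val_lt _))
      rw [hL, hH]
      exact hwrap
  · obtain ⟨⟨k, hk⟩, hkv⟩ := List.mem_iff_get.1 hv
    refine ⟨(k : ZMod l.length), ?_⟩
    have hvk : ((k : ZMod l.length)).val = k := by
      rw [ZMod.val_natCast, Nat.mod_eq_of_lt hk]
    simp only [List.get_eq_getElem] at hkv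
    show l[((k : ZMod l.length)).val]'(ZMod.val_lt _) = v
    rw [← hkv]
    congr 1

/-- Minimum degree two (within a finite set) forces a combinatorial cycle. -/
lemma exists_cycle_list (E : Fin n → Fin n → Prop) (hsym : ∀ a b, E a b → E b a)
    (X : Finset (Fin n))
    (hX : ∀ x ∈ X, ∃ y ∈ X, ∃ z ∈ X, y ≠ z ∧ y ≠ x ∧ z ≠ x ∧ E x y ∧ E x z)
    (hne : X.Nonempty) :
    ∃ l : List (Fin n), 3 ≤ l.length ∧ l.Nodup ∧ (∀ a ∈ l, a ∈ X) ∧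
      l.Chain' E ∧ ∃ h : l ≠ [], E (l.getLast h) (l.head h) := by
  classical
  set P : List (Fin n) → Prop := fun l => l.Nodup ∧ (∀ a ∈ l, a ∈ X) ∧ l.Chain' E with hPdef
  have hbound : ∀ l, P l → l.length ≤ X.card := by
    rintro l ⟨h1, h2, -⟩
    calc l.length = l.toFinset.card := (List.toFinset_card_of_nodup h1).symm
      _ ≤ X.card := Finset.card_le_card (fun a ha => h2 a (List.mem_toFinset.1 ha))
  obtain ⟨x0, hx0⟩ := hne
  set Q : ℕ → Prop := fun k => ∃ l, P l ∧ l.length = k with hQdef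
  have h1 : Q 1 := ⟨[x0], ⟨by simp, by simpa using hx0, List.isChain_singleton _⟩, rfl⟩
  have hcard1 : 1 ≤ X.card := Finset.card_pos.2 ⟨x0, hx0⟩
  obtain ⟨l, hPl, hlen⟩ : Q (Nat.findGreatest Q X.card) := Nat.findGreatest_spec hcard1 h1
  have hlen1 : 1 ≤ l.length := by
    rw [hlen]; exact Nat.le_findGreatest hcard1 h1
  obtain ⟨a, t, rfl⟩ : ∃ a t, l = a :: t := by
    cases l with
    | nil => simp at hlen1
    | cons a t => exact ⟨a, t, rfl⟩
  obtain ⟨hnd, hmem, hch⟩ := hPl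
  have hext : ∀ w, w ∈ X → E a w → w ∈ a :: t := by
    intro w hwX hE
    by_contra hwl
    have hP' : P (w :: a :: t) := by
      refine ⟨List.nodup_cons.2 ⟨hwl, hnd⟩, ?_, List.isChain_cons_cons.2 ⟨hsym _ _ hE, hch⟩⟩
      intro b hb
      rcases List.mem_cons.1 hb with rfl | hb
      · exact hwX
      · exact hmem b hb
    have hle : (w :: a :: t).length ≤ X.card := hbound _ hP'
    have hQ' : Q (w :: a :: t).length := ⟨_, hP', rfl⟩
    have := Nat.le_findGreatest hle hQ'
    rw [← hlen] at this
    simp at this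
  obtain ⟨y, hyX, z, hzX, hyz, hya, hza, hEy, hEz⟩ := hX a (hmem a List.mem_cons_self)
  have hyl : y ∈ t := by
    rcases List.mem_cons.1 (hext y hyX hEy) with rfl | h
    · exact absurd rfl hya
    · exact h
  have hzl : z ∈ t := by
    rcases List.mem_cons.1 (hext z hzX hEz) with rfl | h
    · exact absurd rfl hza
    · exact h
  obtain ⟨⟨iy, hiy⟩, hgy⟩ := List.mem_iff_get.1 hyl
  obtain ⟨⟨iz, hiz⟩, hgz⟩ := List.mem_iff_get.1 hzl
  simp only [List.get_eq_getElem] at hgy hgz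
  have hij : iy ≠ iz := by
    intro h; apply hyz; rw [← hgy, ← hgz]; congr 1
  obtain ⟨j, hjdef⟩ : ∃ j, j = max iy iz := ⟨_, rfl⟩
  have hj1 : 1 ≤ j := by omega
  have hjlt : j < t.length := by omega
  have hEab : E a (t[j]'hjlt) := by
    rcases Nat.le_total iy iz with h | h
    · have e : t[j]'hjlt = t[iz]'hiz := by congr 1; omega
      rw [e, hgz]; exact hEz
    · have e : t[j]'hjlt = t[iy]'hiy := by congr 1; omega
      rw [e, hgy]; exact hEy
  refine ⟨a :: t.take (j+1), ?_, ?_, ?_, ?_, ?_⟩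
  · simp only [List.length_cons, List.length_take]
    omega
  · have hndt : t.Nodup := (List.nodup_cons.1 hnd).2
    refine List.nodup_cons.2 ⟨?_, hndt.sublist (List.take_sublist _ _)⟩
    intro hmem'
    exact (List.nodup_cons.1 hnd).1 (List.take_subset _ _ hmem')
  · intro b hb
    rcases List.mem_cons.1 hb with rfl | hb
    · exact hmem b List.mem_cons_self
    · exact hmem b (List.mem_cons_of_mem _ (List.take_subset _ _ hb))
  · have : a :: t.take (j+1) = (a :: t).take (j+2) := by
      rw [List.take_succ_cons]
    rw [this]
    exact hch.take _
  · have hne' : a :: t.take (j+1) ≠ [] := by simp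
    refine ⟨hne', ?_⟩
    have hlen' : (a :: t.take (j+1)).length = j + 2 := by
      simp only [List.length_cons, List.length_take]; omega
    have hlast : (a :: t.take (j+1)).getLast hne' = t[j]'hjlt := by
      rw [List.getLast_eq_getElem hne']
      have h1 : (a :: t.take (j+1)).length - 1 = j + 1 := by omega
      have h2 : ∀ (hh : (a :: t.take (j+1)).length - 1 < (a :: t.take (j+1)).length),
          (a :: t.take (j+1))[(a :: t.take (j+1)).length - 1]'hh = t[j]'hjlt := by
        intro hh
        have hh2 : j + 1 < (a :: t.take (j+1)).length := by omega
        have e1 : (a :: t.take (j+1))[(a :: t.take (j+1)).length - 1]'hh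
            = (a :: t.take (j+1))[j+1]'hh2 := by
          congr 1
        rw [e1]
        have e2 : (a :: t.take (j+1))[j+1]'hh2 = (t.take (j+1))[j]'(by simp; omega) := by
          simp
        rw [e2]
        exact List.getElem_take
      exact h2 _
    have hhead : (a :: t.take (j+1)).head hne' = a := rfl
    rw [hlast, hhead]
    exact hsym _ _ hEab

end MatchingAux

section MatchingAux2

variable {s n : ℕ} {A : Fin n → Fin n → Prop}

/-- From the head of a chain we can reach any element, within the list. -/
lemma rtg_head_of_chain (hsymm : ∀ i j, A i j ↔ A j i) :
    ∀ (t : List (Fin n)) (a : Fin n), List.Chain' A (a :: t) → ∀ v ∈ a :: t,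
      Relation.ReflTransGen
        (fun x y => x ∈ (a :: t).toFinset ∧ y ∈ (a :: t).toFinset ∧ A x y) a v := by
  intro t
  induction t with
  | nil =>
    intro a _ v hv
    rcases List.mem_cons.1 hv with rfl | hv
    · exact Relation.ReflTransGen.refl
    · simp at hv
  | cons b t' ih =>
    intro a hch v hv
    have hsub : (b :: t').toFinset ⊆ (a :: b :: t').toFinset := by
      intro x hx
      simp only [List.toFinset_cons, Finset.mem_insert] at hx ⊢
      tauto
    rcases List.mem_cons.1 hv with rfl | hv
    · exact Relation.ReflTransGen.refl
    · have hch' := List.isChain_cons_cons.1 hch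
      have hstep : (fun x y => x ∈ (a :: b :: t').toFinset ∧ y ∈ (a :: b :: t').toFinset ∧ A x y) a b := by
        refine ⟨?_, ?_, hch'.1⟩ <;> simp
      have htail := ih b hch'.2 v hv
      have htail' := Relation.ReflTransGen.mono
        (fun x y hxy => ⟨hsub hxy.1, hsub hxy.2.1, hxy.2.2⟩ :
          ∀ x y, (fun x y => x ∈ (b :: t').toFinset ∧ y ∈ (b :: t').toFinset ∧ A x y) x y →
            (fun x y => x ∈ (a :: b :: t').toFinset ∧ y ∈ (a :: b :: t').toFinset ∧ A x y) x y) _ _ htail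
      exact Relation.ReflTransGen.head hstep htail'

/-- A chain is connected as a vertex set. -/
lemma connOn_of_chain (hsymm : ∀ i j, A i j ↔ A j i)
    (l : List (Fin n)) (hch : List.Chain' A l) : connOn A l.toFinset := by
  intro u hu v hv
  cases l with
  | nil => simp at hu
  | cons a t =>
    have hsymrel : Symmetric
        (fun x y => x ∈ (a :: t).toFinset ∧ y ∈ (a :: t).toFinset ∧ A x y) := by
      intro x y hxy
      exact ⟨hxy.2.1, hxy.1, (hsymm x y).1 hxy.2.2⟩
    have h1 := rtg_head_of_chain hsymm t a hch u (List.mem_toFinset.1 hu)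
    have h2 := rtg_head_of_chain hsymm t a hch v (List.mem_toFinset.1 hv)
    exact Relation.ReflTransGen.trans
      (@Std.Symm.symm _ _ (@Relation.ReflTransGen.stdSymm _ _ ⟨fun a b h => hsymrel h⟩) _ _ h1) h2

lemma mem_Tset_iff {v : Fin n} :
    v ∈ Tset s A ↔ ∃ S : Finset (Fin n), v ∈ S ∧ S.card ≤ s - 1 ∧ minNonExpanding A S := by
  simp [Tset]

lemma T_lowdeg (hn : (s : ℝ) ≤ Real.log (Real.log n)) {v : Fin n} (hv : v ∈ Tset s A) :
    (deg A v : ℝ) ≤ Real.log (Real.log n) := by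
  obtain ⟨S, hvS, hcard, hmin⟩ := mem_Tset_iff.1 hv
  have h1 : (Finset.univ.filter fun u => A v u) ⊆ nbr A S := by
    intro u hu
    simp only [nbr, Finset.mem_filter, Finset.mem_univ, true_and] at hu ⊢
    exact ⟨v, hvS, hu⟩
  have h3 := hmin.1
  unfold nonExpanding at h3
  have h2 : deg A v ≤ s := by
    have := Finset.card_le_card h1
    unfold deg
    omega
  calc (deg A v : ℝ) ≤ (s : ℝ) := by exact_mod_cast h2
    _ ≤ _ := hn

lemma T_noloop (hn : (s : ℝ) ≤ Real.log (Real.log n)) (hws : wellSeparated n s A)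
    {v : Fin n} (hv : v ∈ Tset s A) : ¬ A v v := by
  intro hA
  have hsub : Subsingleton (ZMod 1) := by infer_instance
  have hc : cycleThrough A 1 v :=
    ⟨fun _ => v, fun a b _ => Subsingleton.elim a b, fun _ => hA, ⟨0, rfl⟩⟩
  exact hws.2 v (T_lowdeg hn hv) 1 (Or.inl rfl) hc

/-- The edges incident to `T`. -/
def Erel (s : ℕ) {n : ℕ} (A : Fin n → Fin n → Prop) : Fin n → Fin n → Prop :=
  fun a b => A a b ∧ (a ∈ Tset s A ∨ b ∈ Tset s A)

lemma Erel_symm (hsymm : ∀ i j, A i j ↔ A j i) :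
    ∀ a b, Erel s A a b → Erel s A b a :=
  fun a b h => ⟨(hsymm a b).1 h.1, h.2.symm⟩

/-- No combinatorial cycle all of whose edges are incident to `T`. -/
lemma no_T_cycle (hs : 1 ≤ s) (hn : (s : ℝ) ≤ Real.log (Real.log n))
    (hsymm : ∀ i j, A i j ↔ A j i) (hws : wellSeparated n s A) :
    ¬ ∃ l : List (Fin n), 3 ≤ l.length ∧ l.Nodup ∧
      l.Chain' (Erel s A) ∧ ∃ h : l ≠ [], Erel s A (l.getLast h) (l.head h) := by
  rintro ⟨l, h3, hnd, hch, hne, hwrap⟩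
  by_cases hlen : l.length ≤ 12 * s
  · -- use (W2)
    obtain ⟨a, b, t, rfl⟩ : ∃ a b t, l = a :: b :: t := by
      cases l with
      | nil => simp at h3
      | cons a t =>
        cases t with
        | nil => simp at h3
        | cons b t' => exact ⟨a, b, t', rfl⟩
    have hab : Erel s A a b := (List.isChain_cons_cons.1 hch).1
    have hcyc := cycleThrough_of_list (A := A) (a :: b :: t) (by omega) hnd
      (hch.imp (fun _ _ h => h.1)) hne hwrap.1
    rcases hab.2 with hv | hv
    · exact hws.2 a (T_lowdeg hn hv) _ (Or.inr ⟨h3, hlen⟩) (hcyc a (by simp))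
    · exact hws.2 b (T_lowdeg hn hv) _ (Or.inr ⟨h3, hlen⟩) (hcyc b (by simp))
  · -- use (W1) on a path of 5s vertices
    push_neg at hlen
    have hd : Fin n := l.head hne
    obtain ⟨l', hl'⟩ : ∃ l', l' = l.take (5*s) := ⟨_, rfl⟩
    have hmle : 5*s ≤ l.length := by omega
    have hlen' : l'.length = 5*s := by rw [hl']; simp; omega
    have hnd' : l'.Nodup := by rw [hl']; exact hnd.sublist (List.take_sublist _ _)
    have hch' : l'.Chain' (Erel s A) := by rw [hl']; exact hch.take _
    have hchA : l'.Chain' A := hch'.imp (fun _ _ h => h.1)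
    have hconn : connOn A l'.toFinset := connOn_of_chain hsymm l' hchA
    have hcardS : l'.toFinset.card = 5*s := by
      rw [List.toFinset_card_of_nodup hnd', hlen']
    have hW1 := hws.1 l'.toFinset (by omega) hconn
    -- now a lower bound on the number of low-degree vertices
    have hpair : ∀ i, 2*i+1 < l'.length →
        ∃ k, (k = 2*i ∨ k = 2*i+1) ∧ ∃ hk : k < l'.length,
          l'[k] ∈ Tset s A := by
      intro i hi
      have hcha := List.isChain_iff_getElem.1 hch' (2*i) (by omega)
      rcases hcha.2 with h | h
      · exact ⟨2*i, Or.inl rfl, by omega, h⟩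
      · exact ⟨2*i+1, Or.inr rfl, hi, h⟩
    obtain ⟨g, hg⟩ : ∃ g : ℕ → Fin n, ∀ i < 2*s,
        ∃ k, (k = 2*i ∨ k = 2*i+1) ∧ ∃ hk : k < l'.length, g i = l'[k] ∧ l'[k] ∈ Tset s A := by
      refine ⟨fun i => if h : 2*i+1 < l'.length then
        (if h2 : l'[2*i]'(by omega) ∈ Tset s A then l'[2*i]'(by omega) else l'[2*i+1]'h) else hd, ?_⟩
      intro i hi
      have hi' : 2*i+1 < l'.length := by omega
      obtain ⟨k, hk, hklt, hkT⟩ := hpair i hi'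
      by_cases h2 : l'[2*i]'(by omega) ∈ Tset s A
      · exact ⟨2*i, Or.inl rfl, by omega, by simp [hi', h2], h2⟩
      · refine ⟨2*i+1, Or.inr rfl, hi', by simp [hi', h2], ?_⟩
        rcases hk with rfl | rfl
        · exact absurd hkT h2
        · exact hkT
    have hinj : Set.InjOn g (Finset.range (2*s)) := by
      intro i hi j hj hij
      simp only [Finset.coe_sort_coe, Finset.mem_coe, Finset.mem_range] at hi hj
      obtain ⟨ki, hki, hkilt, hgi, -⟩ := hg i hi
      obtain ⟨kj, hkj, hkjlt, hgj, -⟩ := hg j hj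
      have : l'[ki]'hkilt = l'[kj]'hkjlt := by rw [← hgi, ← hgj, hij]
      have hkeq : ki = kj := by
        have := List.nodup_iff_injective_get.1 hnd' (a₁ := ⟨ki, hkilt⟩) (a₂ := ⟨kj, hkjlt⟩)
          (by simpa using this)
        simpa using congrArg Fin.val this
      omega
    have hmaps : ∀ i ∈ Finset.range (2*s),
        g i ∈ l'.toFinset.filter (fun v => (deg A v : ℝ) ≤ Real.log (Real.log n)) := by
      intro i hi
      simp only [Finset.mem_range] at hi
      obtain ⟨k, hk, hklt, hgi, hkT⟩ := hg i hi
      rw [Finset.mem_filter, hgi]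
      exact ⟨List.mem_toFinset.2 (List.getElem_mem _), T_lowdeg hn hkT⟩
    have hcardle := Finset.card_le_card_of_injOn g hmaps hinj
    rw [Finset.card_range] at hcardle
    omega

lemma B_two_nbrs (hsymm : ∀ i j, A i j ↔ A j i) {w : Fin n}
    (hw : w ∈ nbr A (Tset s A)) :
    ∃ y ∈ Tset s A, ∃ z ∈ Tset s A, y ≠ z ∧ A y w ∧ A z w := by
  simp only [nbr, Finset.mem_filter, Finset.mem_univ, true_and] at hw
  obtain ⟨u, hu, hAu⟩ := hw
  obtain ⟨S, huS, hcard, hmin⟩ := mem_Tset_iff.1 hu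
  have hwS : w ∈ nbr A S := by
    simp only [nbr, Finset.mem_filter, Finset.mem_univ, true_and]
    exact ⟨u, huS, hAu⟩
  obtain ⟨y, hy, z, hz, hyz, hAy, hAz⟩ := two_nbrs_of_minNonExpanding hmin hwS
  exact ⟨y, mem_Tset_iff.2 ⟨S, hy, hcard, hmin⟩, z, mem_Tset_iff.2 ⟨S, hz, hcard, hmin⟩,
    hyz, hAy, hAz⟩

lemma T_B_disjoint (hs : 1 ≤ s) (hn : (s : ℝ) ≤ Real.log (Real.log n))
    (hsymm : ∀ i j, A i j ↔ A j i) (hws : wellSeparated n s A) :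
    ∀ v, v ∈ Tset s A → v ∈ nbr A (Tset s A) → False := by
  intro v hvT hvB
  set X := (Tset s A) ∩ (nbr A (Tset s A)) with hX
  have hXprop : ∀ x ∈ X, ∃ y ∈ X, ∃ z ∈ X, y ≠ z ∧ y ≠ x ∧ z ≠ x ∧
      Erel s A x y ∧ Erel s A x z := by
    intro x hx
    obtain ⟨hxT, hxB⟩ := Finset.mem_inter.1 hx
    obtain ⟨y, hyT, z, hzT, hyz, hAy, hAz⟩ := B_two_nbrs hsymm hxB
    have hyB : y ∈ nbr A (Tset s A) := by
      simp only [nbr, Finset.mem_filter, Finset.mem_univ, true_and]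
      exact ⟨x, hxT, (hsymm y x).1 hAy⟩
    have hzB : z ∈ nbr A (Tset s A) := by
      simp only [nbr, Finset.mem_filter, Finset.mem_univ, true_and]
      exact ⟨x, hxT, (hsymm z x).1 hAz⟩
    have hyx : y ≠ x := by
      rintro rfl
      exact T_noloop hn hws hxT hAy
    have hzx : z ≠ x := by
      rintro rfl
      exact T_noloop hn hws hxT hAz
    exact ⟨y, Finset.mem_inter.2 ⟨hyT, hyB⟩, z, Finset.mem_inter.2 ⟨hzT, hzB⟩, hyz, hyx, hzx,
      ⟨(hsymm y x).1 hAy, Or.inl hxT⟩, ⟨(hsymm z x).1 hAz, Or.inl hxT⟩⟩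
  have hne : X.Nonempty := ⟨v, Finset.mem_inter.2 ⟨hvT, hvB⟩⟩
  obtain ⟨l, h3, hnd, hmem, hch, hwrap⟩ :=
    exists_cycle_list (Erel s A) (Erel_symm hsymm) X hXprop hne
  exact no_T_cycle hs hn hsymm hws ⟨l, h3, hnd, hch, hwrap⟩

/-- In any set where every vertex has a `T`-incident neighbour, some vertex has
exactly one such neighbour (else there would be a cycle). -/
lemma exists_leaf (hs : 1 ≤ s) (hn : (s : ℝ) ≤ Real.log (Real.log n))
    (hsymm : ∀ i j, A i j ↔ A j i) (hws : wellSeparated n s A)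
    (X : Finset (Fin n)) (hne : X.Nonempty)
    (hdeg1 : ∀ x ∈ X, ∃ y ∈ X, y ≠ x ∧ Erel s A x y) :
    ∃ x ∈ X, ∃ y ∈ X, y ≠ x ∧ Erel s A x y ∧ ∀ z ∈ X, Erel s A x z → z = y := by
  by_contra hcon
  push_neg at hcon
  have hXprop : ∀ x ∈ X, ∃ y ∈ X, ∃ z ∈ X, y ≠ z ∧ y ≠ x ∧ z ≠ x ∧
      Erel s A x y ∧ Erel s A x z := by
    intro x hx
    obtain ⟨y, hyX, hyx, hE⟩ := hdeg1 x hx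
    obtain ⟨z, hzX, hEz, hzy⟩ := hcon x hx y hyX hyx hE
    have hzx : z ≠ x := by
      rintro rfl
      rcases hEz.2 with h | h <;> exact T_noloop hn hws h hEz.1
    exact ⟨z, hzX, y, hyX, hzy, hzx, hyx, hEz, hE⟩
  obtain ⟨l, h3, hnd, hmem, hch, hwrap⟩ :=
    exists_cycle_list (Erel s A) (Erel_symm hsymm) X hXprop hne
  exact no_T_cycle hs hn hsymm hws ⟨l, h3, hnd, hch, hwrap⟩

end MatchingAux2

section MatchingAux3

variable {s n : ℕ} {A : Fin n → Fin n → Prop}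

/-- Existence of a matching saturating any subset of `N(T)`. -/
lemma exists_matching (hs : 1 ≤ s) (hn : (s : ℝ) ≤ Real.log (Real.log n))
    (hsymm : ∀ i j, A i j ↔ A j i) (hws : wellSeparated n s A) :
    ∀ k (B' : Finset (Fin n)), B' ⊆ nbr A (Tset s A) → B'.card = k →
    ∃ M : Finset (Fin n × Fin n),
      (∀ e ∈ M, e.1 ∈ Tset s A ∧ e.2 ∈ B' ∧ A e.1 e.2) ∧
      (∀ e ∈ M, ∀ f ∈ M, e ≠ f → e.1 ≠ f.1 ∧ e.2 ≠ f.2) ∧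
      (∀ v ∈ B', ∃ e ∈ M, e.2 = v) := by
  intro k
  induction k using Nat.strong_induction_on with
  | _ k ih =>
  intro B' hB' hcard
  rcases Finset.eq_empty_or_nonempty B' with rfl | hBne
  · exact ⟨∅, by simp, by simp, by simp⟩
  -- the "leaf-search" set
  set X := B' ∪ ((Tset s A).filter (fun t => ∃ w ∈ B', A t w)) with hXdef
  have hTB := T_B_disjoint hs hn hsymm hws
  have hne : X.Nonempty := hBne.mono Finset.subset_union_left
  have hdeg1 : ∀ x ∈ X, ∃ y ∈ X, y ≠ x ∧ Erel s A x y := by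
    intro x hx
    rcases Finset.mem_union.1 hx with hx1 | hx2
    · obtain ⟨y, hyT, z, hzT, hyz, hAy, hAz⟩ := B_two_nbrs hsymm (hB' hx1)
      have hyX : y ∈ X := Finset.mem_union.2 (Or.inr (Finset.mem_filter.2
        ⟨hyT, x, hx1, hAy⟩))
      have hyx : y ≠ x := fun h => hTB y hyT (h ▸ hB' hx1)
      exact ⟨y, hyX, hyx, ⟨(hsymm y x).1 hAy, Or.inr hyT⟩⟩
    · obtain ⟨hxT, w, hwB, hAw⟩ := Finset.mem_filter.1 hx2
      have hwX : w ∈ X := Finset.mem_union.2 (Or.inl hwB)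
      have hwx : w ≠ x := fun h => hTB x hxT (h ▸ hB' hwB)
      exact ⟨w, hwX, hwx, ⟨hAw, Or.inl hxT⟩⟩
  obtain ⟨x, hxX, y, hyX, hyx, hE, huniq⟩ := exists_leaf hs hn hsymm hws X hne hdeg1
  -- x cannot lie in B' (it would have two distinct T-neighbours)
  have hxT2 : x ∈ (Tset s A).filter (fun t => ∃ w ∈ B', A t w) := by
    rcases Finset.mem_union.1 hxX with hx1 | hx2
    · exfalso
      obtain ⟨y', hyT, z', hzT, hyz, hAy, hAz⟩ := B_two_nbrs hsymm (hB' hx1)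
      have hyX' : y' ∈ X := Finset.mem_union.2 (Or.inr (Finset.mem_filter.2
        ⟨hyT, x, hx1, hAy⟩))
      have hzX' : z' ∈ X := Finset.mem_union.2 (Or.inr (Finset.mem_filter.2
        ⟨hzT, x, hx1, hAz⟩))
      have h1 := huniq y' hyX' ⟨(hsymm y' x).1 hAy, Or.inr hyT⟩
      have h2 := huniq z' hzX' ⟨(hsymm z' x).1 hAz, Or.inr hzT⟩
      exact hyz (h1.trans h2.symm)
    · exact hx2
  obtain ⟨hxT, w, hwB, hAw⟩ := Finset.mem_filter.1 hxT2
  have hwy : w = y := huniq w (Finset.mem_union.2 (Or.inl hwB)) ⟨hAw, Or.inl hxT⟩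
  rw [hwy] at hwB hAw
  -- y ∈ B' is the unique B'-neighbour of x ∈ T; recurse on B' \ {y}
  have hyB : y ∈ B' := hwB
  have hcard' : (B'.erase y).card = k - 1 := by rw [Finset.card_erase_of_mem hyB, hcard]
  have hk1 : 1 ≤ k := by
    rw [← hcard]; exact Finset.card_pos.2 hBne
  obtain ⟨M, hM1, hM2, hM3⟩ := ih (k-1) (by omega) (B'.erase y)
    ((B'.erase_subset y).trans hB') hcard'
  refine ⟨insert (x, y) M, ?_, ?_, ?_⟩
  · intro e he
    rcases Finset.mem_insert.1 he with rfl | he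
    · exact ⟨hxT, hyB, hAw⟩
    · obtain ⟨h1, h2, h3⟩ := hM1 e he
      exact ⟨h1, B'.erase_subset y h2, h3⟩
  · have hkey : ∀ f ∈ M, f.1 ≠ x ∧ f.2 ≠ y := by
      intro f hf
      obtain ⟨hf1, hf2, hf3⟩ := hM1 f hf
      constructor
      · intro hfx
        have hf2' : f.2 ∈ X := Finset.mem_union.2 (Or.inl (B'.erase_subset y hf2))
        have := huniq f.2 hf2' ⟨hfx ▸ hf3, Or.inl (hfx ▸ hf1)⟩
        exact (Finset.mem_erase.1 hf2).1 this
      · exact (Finset.mem_erase.1 hf2).1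
    intro e he f hf hef
    rcases Finset.mem_insert.1 he with rfl | he <;> rcases Finset.mem_insert.1 hf with h' | hf'
    · exact absurd h'.symm hef
    · obtain ⟨hk1', hk2'⟩ := hkey f hf'
      exact ⟨fun h => hk1' h.symm, fun h => hk2' h.symm⟩
    · obtain ⟨hk1', hk2'⟩ := hkey e he
      rw [h']
      exact ⟨hk1', hk2'⟩
    · exact hM2 e he f hf' hef
  · intro v hv
    by_cases hvy : v = y
    · exact ⟨(x, y), Finset.mem_insert_self _ _, hvy.symm⟩
    · obtain ⟨e, he, he2⟩ := hM3 v (Finset.mem_erase.2 ⟨hvy, hv⟩)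
      exact ⟨e, Finset.mem_insert_of_mem he, he2⟩

lemma isMatching_erase {T₁ B' : Finset (Fin n)} {M : Finset (Fin n × Fin n)}
    {e₀ : Fin n × Fin n} (hM : isMatching A T₁ B' M) (he₀ : e₀ ∈ M) :
    isMatching A (T₁.erase e₀.1) (B'.erase e₀.2) (M.erase e₀) := by
  obtain ⟨h1, h2, h3, h4⟩ := hM
  refine ⟨?_, ?_, ?_, ?_⟩
  · intro e he
    have heM := Finset.mem_of_mem_erase he
    have hne := (Finset.mem_erase.1 he).1
    obtain ⟨ha, hb, hc⟩ := h1 e heM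
    obtain ⟨d1, d2, d3, d4⟩ := h2 e heM e₀ he₀ hne
    exact ⟨Finset.mem_erase.2 ⟨d1, ha⟩, Finset.mem_erase.2 ⟨d4, hb⟩, hc⟩
  · intro e he f hf hef
    exact h2 e (Finset.mem_of_mem_erase he) f (Finset.mem_of_mem_erase hf) hef
  · intro v hv
    obtain ⟨hv1, hv2⟩ := Finset.mem_erase.1 hv
    obtain ⟨e, ⟨heM, he1⟩, huniq⟩ := h3 v hv2
    have hee₀ : e ≠ e₀ := fun h => hv1 (he1 ▸ h ▸ rfl)
    refine ⟨e, ⟨Finset.mem_erase.2 ⟨hee₀, heM⟩, he1⟩, ?_⟩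
    rintro f ⟨hf, hf1⟩
    exact huniq f ⟨Finset.mem_of_mem_erase hf, hf1⟩
  · intro v hv
    obtain ⟨hv1, hv2⟩ := Finset.mem_erase.1 hv
    obtain ⟨e, ⟨heM, he2⟩, huniq⟩ := h4 v hv2
    have hee₀ : e ≠ e₀ := fun h => hv1 (he2 ▸ h ▸ rfl)
    refine ⟨e, ⟨Finset.mem_erase.2 ⟨hee₀, heM⟩, he2⟩, ?_⟩
    rintro f ⟨hf, hf2⟩
    exact huniq f ⟨Finset.mem_of_mem_erase hf, hf2⟩

/-- Uniqueness of perfect matchings between subsets of `T` and of `N(T)`. -/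
lemma matching_unique (hs : 1 ≤ s) (hn : (s : ℝ) ≤ Real.log (Real.log n))
    (hsymm : ∀ i j, A i j ↔ A j i) (hws : wellSeparated n s A) :
    ∀ k (T₁ B' : Finset (Fin n)) (M M' : Finset (Fin n × Fin n)),
      T₁ ⊆ Tset s A → B' ⊆ nbr A (Tset s A) → B'.card = k →
      isMatching A T₁ B' M → isMatching A T₁ B' M' → M = M' := by
  have hTB := T_B_disjoint hs hn hsymm hws
  intro k
  induction k using Nat.strong_induction_on with
  | _ k ih =>
  intro T₁ B' M M' hT hB hcard hM hM'
  rcases Finset.eq_empty_or_nonempty B' with rfl | hBne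
  · have hempty : ∀ (N : Finset (Fin n × Fin n)), isMatching A T₁ ∅ N → N = ∅ := by
      intro N hN
      refine Finset.eq_empty_of_forall_notMem (fun e he => ?_)
      have := (hN.1 e he).2.1
      simp at this
    rw [hempty M hM, hempty M' hM']
  · set X := T₁ ∪ B' with hXdef
    have hne : X.Nonempty := hBne.mono Finset.subset_union_right
    have hdeg1 : ∀ x ∈ X, ∃ y ∈ X, y ≠ x ∧ Erel s A x y := by
      intro x hx
      rcases Finset.mem_union.1 hx with hx1 | hx2
      · obtain ⟨e, ⟨heM, he1⟩, -⟩ := hM.2.2.1 x hx1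
        obtain ⟨hT1, hB1, hA1⟩ := hM.1 e heM
        refine ⟨e.2, Finset.mem_union.2 (Or.inr hB1), ?_, ⟨he1 ▸ hA1, Or.inl (hT hx1)⟩⟩
        intro h
        exact hTB x (hT hx1) (h ▸ hB hB1)
      · obtain ⟨e, ⟨heM, he2⟩, -⟩ := hM.2.2.2 x hx2
        obtain ⟨hT1, hB1, hA1⟩ := hM.1 e heM
        refine ⟨e.1, Finset.mem_union.2 (Or.inl hT1), ?_, ⟨(hsymm e.1 x).1 (he2 ▸ hA1), Or.inr (hT hT1)⟩⟩
        intro h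
        exact hTB e.1 (hT hT1) (h.symm ▸ hB hx2)
    obtain ⟨x, hxX, y, hyX, hyx, hE, huniq⟩ := exists_leaf hs hn hsymm hws X hne hdeg1
    -- identify the common matched pair
    have hpair : ∃ e₀ : Fin n × Fin n, e₀ ∈ M ∧ e₀ ∈ M' ∧ e₀.1 ∈ T₁ ∧ e₀.2 ∈ B' := by
      rcases Finset.mem_union.1 hxX with hx1 | hx2
      · obtain ⟨e, ⟨heM, he1⟩, -⟩ := hM.2.2.1 x hx1
        obtain ⟨e', ⟨heM', he1'⟩, -⟩ := hM'.2.2.1 x hx1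
        obtain ⟨hT1, hB1, hA1⟩ := hM.1 e heM
        obtain ⟨hT1', hB1', hA1'⟩ := hM'.1 e' heM'
        have he2 : e.2 = y := huniq e.2 (Finset.mem_union.2 (Or.inr hB1)) ⟨he1 ▸ hA1, Or.inl (hT hx1)⟩
        have he2' : e'.2 = y := huniq e'.2 (Finset.mem_union.2 (Or.inr hB1')) ⟨he1' ▸ hA1', Or.inl (hT hx1)⟩
        have hee : e = e' := by
          rw [Prod.ext_iff]
          exact ⟨he1.trans he1'.symm, he2.trans he2'.symm⟩
        exact ⟨e, heM, hee ▸ heM', hT1, hB1⟩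
      · obtain ⟨e, ⟨heM, he2⟩, -⟩ := hM.2.2.2 x hx2
        obtain ⟨e', ⟨heM', he2'⟩, -⟩ := hM'.2.2.2 x hx2
        obtain ⟨hT1, hB1, hA1⟩ := hM.1 e heM
        obtain ⟨hT1', hB1', hA1'⟩ := hM'.1 e' heM'
        have he1 : e.1 = y := huniq e.1 (Finset.mem_union.2 (Or.inl hT1))
          ⟨(hsymm e.1 x).1 (he2 ▸ hA1), Or.inr (hT hT1)⟩
        have he1' : e'.1 = y := huniq e'.1 (Finset.mem_union.2 (Or.inl hT1'))
          ⟨(hsymm e'.1 x).1 (he2' ▸ hA1'), Or.inr (hT hT1')⟩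
        have hee : e = e' := by
          rw [Prod.ext_iff]
          exact ⟨he1.trans he1'.symm, he2.trans he2'.symm⟩
        exact ⟨e, heM, hee ▸ heM', hT1, hB1⟩
    obtain ⟨e₀, he₀M, he₀M', he₀T, he₀B⟩ := hpair
    have hk1 : 1 ≤ k := by rw [← hcard]; exact Finset.card_pos.2 hBne
    have hcard' : (B'.erase e₀.2).card = k - 1 := by
      rw [Finset.card_erase_of_mem he₀B, hcard]
    have hrec := ih (k-1) (by omega) (T₁.erase e₀.1) (B'.erase e₀.2)
      (M.erase e₀) (M'.erase e₀)
      ((T₁.erase_subset _).trans hT) ((B'.erase_subset _).trans hB) hcard'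
      (isMatching_erase hM he₀M) (isMatching_erase hM' he₀M')
    ext e
    by_cases hee : e = e₀
    · subst hee
      simp [he₀M, he₀M']
    · constructor
      · intro h
        have h2 : e ∈ M.erase e₀ := Finset.mem_erase.2 ⟨hee, h⟩
        rw [hrec] at h2
        exact Finset.mem_of_mem_erase h2
      · intro h
        have h2 : e ∈ M'.erase e₀ := Finset.mem_erase.2 ⟨hee, h⟩
        rw [← hrec] at h2
        exact Finset.mem_of_mem_erase h2
        
end MatchingAux3

/-- Lemma `matching`: for a well-separated graph `G` on `n`
vertices (with `ln ln n ≥ s`), with `T` the union of all minimal non-expanding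
vertex subsets of size at most `s-1`, there is a subset `T₁ ⊆ T` with
`|T₁| = |N(T)|` such that `G` contains exactly one perfect matching between
`T₁` and `N(T)`. -/
theorem matching (s n : ℕ) (hs : 1 ≤ s) (hn : (s : ℝ) ≤ Real.log (Real.log n))
    (A : Fin n → Fin n → Prop) (hsymm : ∀ i j, A i j ↔ A j i)
    (hws : wellSeparated n s A) :
    ∃ T₁ ⊆ Tset s A, T₁.card = (nbr A (Tset s A)).card ∧
      ∃! M : Finset (Fin n × Fin n), isMatching A T₁ (nbr A (Tset s A)) M := by
  classical
  obtain ⟨M, hM1, hM2, hM3⟩ := exists_matching hs hn hsymm hws (nbr A (Tset s A)).card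
    (nbr A (Tset s A)) (Finset.Subset.refl _) rfl
  have hTB := T_B_disjoint hs hn hsymm hws
  have hfstinj : Set.InjOn Prod.fst (M : Set (Fin n × Fin n)) := by
    intro e he f hf h
    by_contra hne
    exact (hM2 e (Finset.mem_coe.1 he) f (Finset.mem_coe.1 hf) hne).1 h
  have hsndinj : Set.InjOn Prod.snd (M : Set (Fin n × Fin n)) := by
    intro e he f hf h
    by_contra hne
    exact (hM2 e (Finset.mem_coe.1 he) f (Finset.mem_coe.1 hf) hne).2 h
  have himg : M.image Prod.snd = nbr A (Tset s A) := by
    apply Finset.Subset.antisymm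
    · intro x hx
      obtain ⟨e, he, rfl⟩ := Finset.mem_image.1 hx
      exact (hM1 e he).2.1
    · intro v hv
      obtain ⟨e, he, he2⟩ := hM3 v hv
      exact Finset.mem_image.2 ⟨e, he, he2⟩
  have hsubT : M.image Prod.fst ⊆ Tset s A := by
    intro x hx
    obtain ⟨e, he, rfl⟩ := Finset.mem_image.1 hx
    exact (hM1 e he).1
  have hisM : isMatching A (M.image Prod.fst) (nbr A (Tset s A)) M := by
    refine ⟨?_, ?_, ?_, ?_⟩
    · intro e he
      exact ⟨Finset.mem_image_of_mem _ he, (hM1 e he).2.1, (hM1 e he).2.2⟩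
    · intro e he f hf hef
      obtain ⟨h1, h2⟩ := hM2 e he f hf hef
      refine ⟨h1, ?_, ?_, h2⟩
      · intro h
        exact hTB e.1 (hM1 e he).1 (h ▸ (hM1 f hf).2.1)
      · intro h
        exact hTB f.1 (hM1 f hf).1 (h ▸ (hM1 e he).2.1)
    · intro v hv
      obtain ⟨e, he, rfl⟩ := Finset.mem_image.1 hv
      refine ⟨e, ⟨he, rfl⟩, ?_⟩
      rintro f ⟨hf, hf1⟩
      by_contra hfe
      exact (hM2 f hf e he hfe).1 hf1
    · intro v hv
      obtain ⟨e, he, he2⟩ := hM3 v hv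
      refine ⟨e, ⟨he, he2⟩, ?_⟩
      rintro f ⟨hf, hf2⟩
      by_contra hfe
      exact (hM2 f hf e he hfe).2 (hf2.trans he2.symm)
  refine ⟨M.image Prod.fst, hsubT, ?_, M, hisM, ?_⟩
  · rw [Finset.card_image_of_injOn hfstinj, ← himg, Finset.card_image_of_injOn hsndinj]
  · intro M' hM'
    exact matching_unique hs hn hsymm hws (nbr A (Tset s A)).card _ _ M' M
      hsubT (Finset.Subset.refl _) rfl hM' hisM
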